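/- arXiv:2003.14057 — 2 statements merged into one kernel-verified Lean document; each statement's English description precedes it below -/
import Mathlib

section
/- Let M = r^a with r prime and a ≥ 1, let q be a prime power with gcd(q, M) = 1, and let f ∈ F_q[X] be a monic irreducible polynomial of degree d with f ≠ X. Let 𝔪(r;q) denote the multiplicative order of q modulo r. If 𝔪(r;q) does not divide d, then f is an M-power polynomial. -/
open Polynomial

/-- Let `M = r^a` with `r` prime, `gcd(q,M) = 1`, and let `f` be monic
irreducible of degree `d` with `f ≠ X`. If the multiplicative order of `q` modulo `r`
does not divide `d`, then `f` is an M-power polynomial, i.e. `f(X^M)` has an irreducible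
factor of degree `d`. -/
theorem statement2 (F : Type*) [Field F] [Fintype F] (r a M : ℕ) (hr : r.Prime) (ha : 1 ≤ a)
    (hMra : M = r ^ a) (hcop : Nat.Coprime (Fintype.card F) M)
    (f : F[X]) (hmon : f.Monic) (hirr : Irreducible f) (hfX : f ≠ X)
    (d : ℕ) (hdeg : f.natDegree = d)
    (hord : ¬ orderOf ((Fintype.card F : ZMod r)) ∣ d) :
    ∃ g : F[X], Irreducible g ∧ g ∣ f.comp (X ^ M) ∧ g.natDegree = d := by
  classical
  have hf0 : f ≠ 0 := hirr.ne_zero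
  have : Fact (Irreducible f) := ⟨hirr⟩
  set q := Fintype.card F with hq
  let K := AdjoinRoot f
  let pb : PowerBasis F K := AdjoinRoot.powerBasis hf0
  have hFD : FiniteDimensional F K := pb.finite
  have hrank : Module.finrank F K = d := by
    rw [pb.finrank]
    exact hdeg
  have hfinK : Finite K := Module.finite_of_finite F
  have : Fintype K := Fintype.ofFinite K
  have hcardK : Fintype.card K = q ^ d := by
    rw [Module.card_eq_pow_finrank (K := F) (V := K), hrank]
  -- r does not divide q^d - 1
  have hq1 : 1 ≤ q ^ d := Nat.one_le_pow _ _ Fintype.card_pos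
  have hrnd : ¬ r ∣ q ^ d - 1 := by
    intro hdvd
    apply hord
    rw [orderOf_dvd_iff_pow_eq_one]
    have h2 : ((1 : ℕ) : ZMod r) = ((q ^ d : ℕ) : ZMod r) :=
      (ZMod.natCast_eq_natCast_iff _ _ _).mpr ((Nat.modEq_iff_dvd' hq1).mpr hdvd)
    push_cast at h2
    exact h2.symm
  have hcopM : Nat.Coprime (Nat.card Kˣ) M := by
    have hcardU : Nat.card Kˣ = q ^ d - 1 := by
      rw [Nat.card_eq_fintype_card, Fintype.card_units, hcardK]
    rw [hcardU, hMra]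
    exact Nat.Coprime.pow_right _ (((Nat.Prime.coprime_iff_not_dvd hr).mpr hrnd).symm)
  -- the root α of f in K
  set α : K := AdjoinRoot.root f with hα
  have hα0 : α ≠ 0 := by
    intro h0
    have h1 : (AdjoinRoot.of f) (f.coeff 0) = 0 := by
      have := AdjoinRoot.eval₂_root f
      rwa [← hα, h0, Polynomial.eval₂_at_zero] at this
    have hc0 : f.coeff 0 = 0 := (AdjoinRoot.of f).injective (by rw [h1, map_zero])
    have hXdvd : X ∣ f := Polynomial.X_dvd_iff.mpr hc0
    exact hfX (Polynomial.eq_of_monic_of_associated hmon Polynomial.monic_X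
      (associated_of_dvd_dvd hXdvd ((Polynomial.irreducible_X.dvd_symm hirr) hXdvd)).symm)
  -- find β with β ^ M = α
  obtain ⟨βu, hβu⟩ := (powCoprime hcopM).surjective (Units.mk0 α hα0)
  set β : K := ((βu : Kˣ) : K) with hβ
  have hβM : β ^ M = α := by
    have := congrArg (Units.val) hβu
    simpa [powCoprime, Units.val_pow_eq_pow_val] using this
  have hβint : IsIntegral F β := IsIntegral.of_finite F β
  refine ⟨minpoly F β, minpoly.irreducible hβint, ?_, ?_⟩
  · apply minpoly.dvd
    rw [Polynomial.aeval_comp]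
    simp only [hβM, hα, Polynomial.aeval_X, map_pow]
    rw [AdjoinRoot.aeval_eq, AdjoinRoot.mk_self]
  · -- F⟮β⟯ = ⊤
    have htop : IntermediateField.adjoin F {β} = ⊤ := by
      rw [eq_top_iff]
      intro x _
      have hαmem : α ∈ IntermediateField.adjoin F {β} := by
        rw [← hβM]
        exact pow_mem (IntermediateField.mem_adjoin_simple_self F β) M
      have : (IntermediateField.adjoin F {β}).toSubalgebra = ⊤ := by
        rw [eq_top_iff, ← AdjoinRoot.adjoinRoot_eq_top (f := f)]
        apply Algebra.adjoin_le
        exact Set.singleton_subset_iff.mpr hαmem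
      exact (Subalgebra.ext_iff.mp this x).mpr trivial
    have := IntermediateField.adjoin.finrank hβint
    rw [← this, ← hrank]
    have : Module.finrank F (IntermediateField.adjoin F {β}) =
        Module.finrank F K := by
      rw [htop]
      exact IntermediateField.finrank_top'
    rw [this]
end

section
/- Let M ≥ 2 with gcd(q, M) = 1 and let α ∈ GL(n, F_q) be a regular element, i.e., the minimal polynomial of α equals its characteristic polynomial. Then X^M = α has a solution in GL(n, F_q) if and only if every monic irreducible factor of the characteristic polynomial of α is an M-power polynomial. -/
open Polynomial

open Matrix UniqueFactorizationMonoid IntermediateField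

section Auxiliary

variable {F : Type*} [Field F] {n : ℕ}

lemma exists_mulVec_ne_zero {B : Matrix (Fin n) (Fin n) F} (hB : B ≠ 0) :
    ∃ v, B *ᵥ v ≠ 0 := by
  by_contra h
  push_neg at h
  apply hB
  ext i j
  have := congrFun (h (Pi.single j 1)) i
  simpa [Matrix.mulVec_single] using this

lemma mulVec_finset_sum {ι : Type*} (B : Matrix (Fin n) (Fin n) F) (t : Finset ι)
    (f : ι → (Fin n → F)) : B *ᵥ (∑ i ∈ t, f i) = ∑ i ∈ t, B *ᵥ f i := by
  ext i
  simp only [Matrix.mulVec, dotProduct, Finset.sum_apply, Finset.mul_sum]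
  exact Finset.sum_comm

lemma exists_order (A : Matrix (Fin n) (Fin n) F) (w : Fin n → F) :
    ∃ μ : F[X], ∀ p : F[X], (aeval A p) *ᵥ w = 0 ↔ μ ∣ p := by
  let I : Ideal F[X] :=
  { carrier := {p | (aeval A p) *ᵥ w = 0}
    add_mem' := fun {a b} ha hb => by
      simp only [Set.mem_setOf_eq, map_add, Matrix.add_mulVec] at *
      rw [ha, hb, add_zero]
    zero_mem' := by simp [Set.mem_setOf_eq]
    smul_mem' := fun c x hx => by
      simp only [Set.mem_setOf_eq, smul_eq_mul, _root_.map_mul] at *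
      rw [← Matrix.mulVec_mulVec, hx, Matrix.mulVec_zero] }
  obtain ⟨μ, hμ⟩ := (IsPrincipalIdealRing.principal I).principal
  refine ⟨μ, fun p => ?_⟩
  have h1 : p ∈ I ↔ p ∈ Ideal.span {μ} := by rw [hμ]
  rw [Ideal.mem_span_singleton] at h1
  exact h1

lemma exists_cyclic (A : Matrix (Fin n) (Fin n) F) :
    ∃ v : Fin n → F, ∀ p : F[X], (aeval A p) *ᵥ v = 0 → minpoly F A ∣ p := by
  classical
  have hint : IsIntegral F A := IsIntegral.of_finite F A
  set m := minpoly F A with hmdef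
  have hmon : m.Monic := minpoly.monic hint
  have hm0 : m ≠ 0 := hmon.ne_zero
  by_cases hu1 : IsUnit m
  · exact ⟨0, fun p _ => hu1.dvd⟩
  set s := (normalizedFactors m).toFinset with hs
  set e : F[X] → ℕ := fun g => (normalizedFactors m).count g with he
  have hmem : ∀ g ∈ s, g ∈ normalizedFactors m := fun g hg => Multiset.mem_toFinset.mp hg
  have hprime : ∀ g ∈ s, Prime g := fun g hg => prime_of_normalized_factor g (hmem g hg)
  have hnorm : ∀ g ∈ s, normalize g = g := fun g hg => normalize_normalized_factor g (hmem g hg)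
  have he1 : ∀ g ∈ s, 1 ≤ e g := fun g hg => Multiset.one_le_count_iff_mem.mpr (hmem g hg)
  have hmonic : ∀ g ∈ normalizedFactors m, g.Monic := by
    intro g hg
    have h0 : g ≠ 0 := (prime_of_normalized_factor g hg).ne_zero
    have := Polynomial.monic_normalize h0
    rwa [normalize_normalized_factor g hg] at this
  have hne : ∀ g ∈ s, ∀ g' ∈ s, g ≠ g' → ¬ g ∣ g' := by
    intro g hg g' hg' hne hdvd
    exact hne (eq_of_monic_of_associated (hmonic g (hmem g hg)) (hmonic g' (hmem g' hg'))
      ((hprime g hg).irreducible.associated_of_dvd (hprime g' hg').irreducible hdvd))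
  have hprod : ∏ g ∈ s, g ^ e g = m := by
    rw [show (∏ g ∈ s, g ^ e g) = (normalizedFactors m).prod from
      (Finset.prod_multiset_count _).symm]
    refine eq_of_monic_of_associated ?_ hmon (prod_normalizedFactors hm0)
    have h5 : ((normalizedFactors m).map id).prod.Monic :=
      monic_multiset_prod_of_monic _ _ (fun g hg => hmonic g hg)
    simpa using h5
  set mg : F[X] → F[X] := fun g => ∏ g' ∈ s.erase g, g' ^ e g' with hmg
  have hsplit : ∀ g ∈ s, g ^ e g * mg g = m := by
    intro g hg
    rw [← hprod]
    simpa [hmg] using Finset.mul_prod_erase s (fun g' => g' ^ e g') hg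
  have hcop : ∀ g ∈ s, ¬ g ∣ mg g := by
    intro g hg hdvd
    obtain ⟨g', hg', hdvd'⟩ := (hprime g hg).exists_mem_finset_dvd hdvd
    exact hne g hg g' (Finset.mem_of_mem_erase hg')
      (Finset.ne_of_mem_erase hg').symm ((hprime g hg).dvd_of_dvd_pow hdvd')
  have hcop' : ∀ g ∈ s, IsCoprime g (mg g) := fun g hg =>
    ((hprime g hg).irreducible.coprime_iff_not_dvd).mpr (hcop g hg)
  have hgm : ∀ g ∈ s, g ^ e g ∣ m := fun g hg => (hsplit g hg) ▸ dvd_mul_right _ _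
  have hexu : ∀ g ∈ s, ∃ w, aeval A (mg g * g ^ (e g - 1)) *ᵥ w ≠ 0 := by
    intro g hg
    apply exists_mulVec_ne_zero
    intro h0
    have hdvd : m ∣ mg g * g ^ (e g - 1) := minpoly.dvd F A h0
    have h1 : g ^ e g ∣ g ^ (e g - 1) := by
      refine ((hcop' g hg).pow_left).dvd_of_dvd_mul_left ?_
      exact (hgm g hg).trans hdvd
    rw [pow_dvd_pow_iff (hprime g hg).ne_zero (hprime g hg).not_unit] at h1
    have := he1 g hg
    omega
  choose! u hu using hexu
  refine ⟨∑ g ∈ s, aeval A (mg g) *ᵥ u g, fun p hp => ?_⟩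
  have key : ∀ g ∈ s, g ^ e g ∣ p := by
    intro g hg
    obtain ⟨μ, hμ⟩ := exists_order A (u g)
    have h0 : ∀ g' ∈ s, g' ≠ g → aeval A (mg g * p * mg g') *ᵥ u g' = 0 := by
      intro g' hg' hne'
      have hdvd : m ∣ mg g * p * mg g' := by
        have h1 : g' ^ e g' ∣ mg g :=
          Finset.dvd_prod_of_mem _ (Finset.mem_erase.mpr ⟨hne', hg'⟩)
        have h2 : m ∣ mg g * mg g' := by
          calc m = g' ^ e g' * mg g' := (hsplit g' hg').symm
            _ ∣ mg g * mg g' := mul_dvd_mul_right h1 _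
        have h3 : mg g * p * mg g' = p * (mg g * mg g') := by ring
        rw [h3]
        exact h2.mul_left p
      obtain ⟨c, hc⟩ := hdvd
      rw [hc, _root_.map_mul, hmdef, minpoly.aeval, zero_mul, Matrix.zero_mulVec]
    have hsum : ∑ g' ∈ s, aeval A (mg g * p * mg g') *ᵥ u g' = 0 := by
      calc ∑ g' ∈ s, aeval A (mg g * p * mg g') *ᵥ u g'
          = ∑ g' ∈ s, aeval A (mg g * p) *ᵥ (aeval A (mg g') *ᵥ u g') := by
            refine Finset.sum_congr rfl fun g' _ => ?_
            rw [Matrix.mulVec_mulVec, ← _root_.map_mul]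
        _ = aeval A (mg g * p) *ᵥ ∑ g' ∈ s, aeval A (mg g') *ᵥ u g' := by
            rw [mulVec_finset_sum]
        _ = aeval A (mg g) *ᵥ ((aeval A p) *ᵥ ∑ g' ∈ s, aeval A (mg g') *ᵥ u g') := by
            rw [Matrix.mulVec_mulVec, ← _root_.map_mul]
        _ = 0 := by rw [hp, Matrix.mulVec_zero]
    have hsingle : aeval A (mg g * p * mg g) *ᵥ u g = 0 := by
      rwa [Finset.sum_eq_single_of_mem g hg (fun g' hg' hne' => h0 g' hg' hne')] at hsum
    have hμ1 : μ ∣ mg g * p * mg g := (hμ _).mp hsingle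
    have hμm : μ ∣ m := (hμ m).mp (by rw [hmdef, minpoly.aeval, Matrix.zero_mulVec])
    have hμn : ¬ μ ∣ mg g * g ^ (e g - 1) := fun hd => hu g hg ((hμ _).mpr hd)
    have hμm' : μ ∣ g ^ e g * mg g := (hsplit g hg).symm ▸ hμm
    obtain ⟨μ₁, μ₂, h1, h2, h12⟩ := exists_dvd_and_dvd_of_dvd_mul hμm'
    obtain ⟨j, hj, hassoc⟩ := (dvd_prime_pow (hprime g hg) _).mp h1
    have hjeq : j = e g := by
      by_contra hne''
      have hj' : j ≤ e g - 1 := by omega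
      apply hμn
      have d1 : μ₁ ∣ g ^ (e g - 1) := hassoc.dvd.trans (pow_dvd_pow g hj')
      have d2 : μ ∣ g ^ (e g - 1) * mg g := h12 ▸ mul_dvd_mul d1 h2
      rwa [mul_comm] at d2
    have hge : g ^ e g ∣ μ := by
      rw [← hjeq]
      exact (hassoc.symm.dvd).trans ⟨μ₂, h12⟩
    have hrearr : mg g * p * mg g = p * (mg g * mg g) := by ring
    have hcc : IsCoprime (g ^ e g) (mg g * mg g) :=
      ((hcop' g hg).pow_left).mul_right ((hcop' g hg).pow_left)
    refine hcc.dvd_of_dvd_mul_right ?_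
    rw [← hrearr]
    exact hge.trans hμ1
  calc m = ∏ g ∈ s, g ^ e g := hprod.symm
    _ ∣ p := by
      refine Finset.prod_dvd_of_coprime ?_ key
      intro g hg g' hg' hne'
      exact ((((hprime g hg).irreducible.coprime_iff_not_dvd).mpr
        (hne g hg g' hg' hne')).pow (m := e g) (n := e g'))

lemma commutant_eq_poly {A B : Matrix (Fin n) (Fin n) F}
    (hreg : minpoly F A = Matrix.charpoly A) (hcomm : A * B = B * A) :
    ∃ q : F[X], B = aeval A q := by
  classical
  obtain ⟨v, hv⟩ := exists_cyclic A
  have hdeg : (minpoly F A).natDegree = n := by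
    rw [hreg, Matrix.charpoly_natDegree_eq_dim, Fintype.card_fin]
  have hmon : (minpoly F A).Monic := minpoly.monic (IsIntegral.of_finite F A)
  -- the evaluation linear map
  let L : F[X] →ₗ[F] (Fin n → F) :=
  { toFun := fun p => aeval A p *ᵥ v
    map_add' := fun a b => by simp [map_add, Matrix.add_mulVec]
    map_smul' := fun c x => by
      simp [_root_.map_smul, Matrix.smul_mulVec] }
  let ψ : degreeLT F n →ₗ[F] (Fin n → F) := L.comp (Submodule.subtype _)
  have hinj : Function.Injective ψ := by
    rw [← LinearMap.ker_eq_bot]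
    rw [Submodule.eq_bot_iff]
    rintro ⟨p, hp⟩ h
    have h0 : aeval A p *ᵥ v = 0 := h
    have hdvd := hv p h0
    have hp0 : p = 0 := by
      by_contra hne
      have h1 := Polynomial.degree_le_of_dvd hdvd hne
      rw [Polynomial.mem_degreeLT] at hp
      rw [Polynomial.degree_eq_natDegree hmon.ne_zero, hdeg] at h1
      exact absurd (lt_of_le_of_lt h1 hp) (lt_irrefl _)
    exact Subtype.ext hp0
  have hsurj : Function.Surjective ψ := by
    haveI : Module.Finite F (degreeLT F n) := Module.Finite.equiv (Polynomial.degreeLTEquiv F n).symm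
    have hfr : Module.finrank F (degreeLT F n) = Module.finrank F (Fin n → F) := by
      rw [(Polynomial.degreeLTEquiv F n).finrank_eq]
    exact (LinearMap.injective_iff_surjective_of_finrank_eq_finrank hfr).mp hinj
  -- commuting facts
  have hc : Commute B A := hcomm.symm
  have key : ∀ p : F[X], Commute B (aeval A p) := by
    intro p
    induction p using Polynomial.induction_on' with
    | add f g hf hg => rw [map_add]; exact hf.add_right hg
    | monomial k a =>
      rw [Polynomial.aeval_monomial]
      exact ((Algebra.commute_algebraMap_left a B).symm).mul_right (hc.pow_right k)
  obtain ⟨⟨q, hqlt⟩, hq⟩ := hsurj (B *ᵥ v)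
  refine ⟨q, ?_⟩
  have hall : ∀ w, B *ᵥ w = aeval A q *ᵥ w := by
    intro w
    obtain ⟨⟨p, hplt⟩, hp⟩ := hsurj w
    have hp' : aeval A p *ᵥ v = w := hp
    have hq' : aeval A q *ᵥ v = B *ᵥ v := hq
    calc B *ᵥ w = B *ᵥ (aeval A p *ᵥ v) := by rw [hp']
      _ = (B * aeval A p) *ᵥ v := by rw [Matrix.mulVec_mulVec]
      _ = (aeval A p * B) *ᵥ v := by rw [key p]
      _ = aeval A p *ᵥ (B *ᵥ v) := by rw [Matrix.mulVec_mulVec]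
      _ = aeval A p *ᵥ (aeval A q *ᵥ v) := by rw [hq']
      _ = (aeval A p * aeval A q) *ᵥ v := by rw [Matrix.mulVec_mulVec]
      _ = (aeval A q * aeval A p) *ᵥ v := by rw [← _root_.map_mul, mul_comm p q, _root_.map_mul]
      _ = aeval A q *ᵥ w := by rw [← Matrix.mulVec_mulVec, hp']
  ext i j
  have := congrFun (hall (Pi.single j 1)) i
  simpa [Matrix.mulVec_single] using this

lemma mpower_iff_root (M : ℕ) {g : F[X]} (hg : Irreducible g) :
    (∃ μ : AdjoinRoot g, μ ^ M = AdjoinRoot.root g) ↔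
      (∃ h : F[X], Irreducible h ∧ h ∣ g.comp (X ^ M) ∧ h.natDegree = g.natDegree) := by
  haveI := Fact.mk hg
  haveI : FiniteDimensional F (AdjoinRoot g) := (AdjoinRoot.powerBasis hg.ne_zero).finite
  have hfrg : Module.finrank F (AdjoinRoot g) = g.natDegree := by
    rw [(AdjoinRoot.powerBasis hg.ne_zero).finrank, AdjoinRoot.powerBasis_dim]
  constructor
  · rintro ⟨μ, hμ⟩
    have hint : IsIntegral F μ := IsIntegral.of_finite F μ
    refine ⟨minpoly F μ, minpoly.irreducible hint, ?_, ?_⟩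
    · refine minpoly.dvd F μ ?_
      rw [Polynomial.aeval_comp]
      simp only [map_pow, Polynomial.aeval_X]
      rw [hμ, AdjoinRoot.aeval_eq, AdjoinRoot.mk_self]
    · have htop : F⟮μ⟯ = (⊤ : IntermediateField F (AdjoinRoot g)) := by
        rw [eq_top_iff, ← IntermediateField.adjoin_root_eq_top g]
        rw [IntermediateField.adjoin_le_iff]
        intro x hx
        rw [Set.mem_singleton_iff] at hx
        subst hx
        rw [← hμ]
        exact pow_mem (IntermediateField.mem_adjoin_simple_self F μ) M
      rw [← IntermediateField.adjoin.finrank hint, htop, IntermediateField.finrank_top', hfrg]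
  · rintro ⟨h, hirr, hdvd, hdeg⟩
    haveI := Fact.mk hirr
    haveI : FiniteDimensional F (AdjoinRoot h) := (AdjoinRoot.powerBasis hirr.ne_zero).finite
    have hfrh : Module.finrank F (AdjoinRoot h) = h.natDegree := by
      rw [(AdjoinRoot.powerBasis hirr.ne_zero).finrank, AdjoinRoot.powerBasis_dim]
    have hν : aeval ((AdjoinRoot.root h) ^ M) g = 0 := by
      have h1 : aeval (AdjoinRoot.root h) (g.comp (X ^ M)) = 0 := by
        rw [AdjoinRoot.aeval_eq, AdjoinRoot.mk_eq_zero]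
        exact hdvd
      rw [Polynomial.aeval_comp] at h1
      simpa using h1
    let φ : AdjoinRoot g →ₐ[F] AdjoinRoot h := AdjoinRoot.liftAlgHom g (Algebra.ofId F (AdjoinRoot h)) ((AdjoinRoot.root h) ^ M) hν
    have hinj : Function.Injective φ := φ.toRingHom.injective
    have hsurj : Function.Surjective φ := by
      have hfr : Module.finrank F (AdjoinRoot g) = Module.finrank F (AdjoinRoot h) := by
        rw [hfrg, hfrh, hdeg]
      have := (LinearMap.injective_iff_surjective_of_finrank_eq_finrank
        (f := φ.toLinearMap) hfr).mp hinj
      exact this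
    obtain ⟨μ, hμ⟩ := hsurj (AdjoinRoot.root h)
    refine ⟨μ, hinj ?_⟩
    rw [map_pow, hμ]; exact (AdjoinRoot.liftAlgHom_root _ _ _ _).symm

lemma hensel_lift (M : ℕ) (hMF : ((M : F)) ≠ 0) {g : F[X]} (hg : Irreducible g)
    (hgX : ¬ g ∣ X) {p : F[X]} (hp : g ∣ p ^ M - X) :
    ∀ e : ℕ, 1 ≤ e → ∃ q : F[X], g ^ e ∣ q ^ M - X := by
  have hgP : Prime g := hg.prime
  have hM0 : M ≠ 0 := by rintro rfl; simp at hMF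
  intro e he
  induction e, he using Nat.le_induction with
  | base => exact ⟨p, by simpa using hp⟩
  | succ e he ih =>
    obtain ⟨q, hq⟩ := ih
    obtain ⟨r, hr⟩ := hq
    have hgq1 : g ∣ q ^ M - X := dvd_trans (dvd_pow_self g (by omega)) ⟨r, hr⟩
    have hgq : ¬ g ∣ q := by
      intro hd
      refine hgX ?_
      have h2 : g ∣ q ^ M - (q ^ M - X) := dvd_sub (dvd_pow hd hM0) hgq1
      simpa using h2
    set c : F[X] := (M : F[X]) * q ^ (M - 1) with hc
    have hgc : ¬ g ∣ c := by
      intro hd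
      rcases hgP.dvd_mul.mp hd with h1 | h1
      · refine hgP.not_unit (isUnit_of_dvd_unit h1 ?_)
        rw [← Polynomial.C_eq_natCast]
        exact Polynomial.isUnit_C.mpr (isUnit_iff_ne_zero.mpr hMF)
      · exact hgq (hgP.dvd_of_dvd_pow h1)
    have hcop : IsCoprime g c := (hg.coprime_iff_not_dvd).mpr hgc
    obtain ⟨a, b, hab⟩ := hcop
    set t : F[X] := -(b * r) with ht
    have hgs : r + c * t = g * (a * r) := by
      rw [ht]
      linear_combination (-r) * hab
    -- binomial expansion in (F[X])[Y]
    obtain ⟨k, hk⟩ := Polynomial.binomExpansion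
      ((Polynomial.X : (F[X])[X]) ^ M - Polynomial.C Polynomial.X) q (t * g ^ e)
    have heval : ∀ z : F[X],
        (((Polynomial.X : (F[X])[X]) ^ M - Polynomial.C Polynomial.X).eval z) = z ^ M - X := by
      intro z; simp
    have hder : (((Polynomial.X : (F[X])[X]) ^ M - Polynomial.C Polynomial.X).derivative).eval q
        = c := by
      simp [Polynomial.derivative_X_pow, hc]
    rw [heval, heval, hder] at hk
    refine ⟨q + t * g ^ e, ?_⟩
    have hkey : (q + t * g ^ e) ^ M - X
        = g ^ (e + 1) * (a * r) + k * (t * g ^ e) ^ 2 := by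
      rw [hk, hr]
      have h2 : g ^ (e + 1) * (a * r) = g ^ e * (r + c * t) := by
        rw [hgs]; ring
      rw [h2]; ring
    rw [hkey]
    refine dvd_add (dvd_mul_right _ _) ?_
    have h3 : g ^ (e + 1) ∣ (g ^ e) ^ 2 := by
      rw [← pow_mul]
      exact pow_dvd_pow g (by omega)
    have h4 : k * (t * g ^ e) ^ 2 = (k * t ^ 2) * (g ^ e) ^ 2 := by ring
    rw [h4]
    exact h3.trans (dvd_mul_left _ _)

lemma extract_pow {g : F[X]} (hg : Irreducible g) :
    ∀ N : ℕ, ∀ f : F[X], f ≠ 0 → f.natDegree ≤ N → ∃ e h, f = g ^ e * h ∧ ¬ g ∣ h := by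
  have hg1 : 1 ≤ g.natDegree := hg.natDegree_pos
  intro N
  induction N with
  | zero =>
    intro f hf0 hfd
    refine ⟨0, f, by simp, ?_⟩
    intro hd
    have := Polynomial.natDegree_le_of_dvd hd hf0
    omega
  | succ N ih =>
    intro f hf0 hfd
    by_cases hdvd : g ∣ f
    · obtain ⟨f', rfl⟩ := hdvd
      have hf'0 : f' ≠ 0 := fun h => hf0 (by simp [h])
      have hdeg : f'.natDegree ≤ N := by
        have := Polynomial.natDegree_mul hg.ne_zero hf'0
        omega
      obtain ⟨e, h, heq, hnd⟩ := ih f' hf'0 hdeg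
      exact ⟨e + 1, h, by rw [heq]; ring, hnd⟩
    · exact ⟨0, f, by simp, hdvd⟩

lemma crt_solve (M : ℕ) (hMF : ((M : F)) ≠ 0) :
    ∀ N : ℕ, ∀ f : F[X], f.natDegree ≤ N → f.Monic → ¬ X ∣ f →
      (∀ g : F[X], g.Monic → Irreducible g → g ∣ f → ∃ p : F[X], g ∣ p ^ M - X) →
      ∃ p : F[X], f ∣ p ^ M - X := by
  intro N
  induction N with
  | zero =>
    intro f hfd hfm _ _
    have : f = 1 := hfm.natDegree_eq_zero.mp (by omega)
    exact ⟨X, by simp [this]⟩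
  | succ N ih =>
    intro f hfd hfm hfX hfac
    by_cases hdeg0 : f.natDegree = 0
    · have : f = 1 := hfm.natDegree_eq_zero.mp hdeg0
      exact ⟨X, by simp [this]⟩
    · have hf0 : f ≠ 0 := hfm.ne_zero
      obtain ⟨g, hgm, hgirr, hgdvd⟩ := Polynomial.exists_monic_irreducible_factor f
        (by
          intro hu
          exact hdeg0 (Polynomial.natDegree_eq_zero_of_isUnit hu))
      obtain ⟨e, h, hfe, hgh⟩ := extract_pow hgirr f.natDegree f hf0 le_rfl
      have hgP : Prime g := hgirr.prime
      have he1 : 1 ≤ e := by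
        by_contra he0
        have : e = 0 := by omega
        subst this
        rw [hfe] at hgdvd
        simp at hgdvd
        exact hgh hgdvd
      have hhm : h.Monic := (hgm.pow e).of_mul_monic_left (hfe ▸ hfm)
      have hh0 : h ≠ 0 := hhm.ne_zero
      have hgd1 : 1 ≤ g.natDegree := hgirr.natDegree_pos
      have hdegs : f.natDegree = e * g.natDegree + h.natDegree := by
        rw [hfe, Polynomial.natDegree_mul (pow_ne_zero e hgirr.ne_zero) hh0,
          Polynomial.natDegree_pow]
      have hhdeg : h.natDegree ≤ N := by nlinarith
      -- solve modulo h by induction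
      obtain ⟨ph, hph⟩ := ih h hhdeg hhm
        (fun hd => hfX (hd.trans (hfe ▸ Dvd.intro_left _ rfl)))
        (fun g' hg'm hg'irr hg'dvd => hfac g' hg'm hg'irr
          (hg'dvd.trans (hfe ▸ Dvd.intro_left _ rfl)))
      -- solve modulo g^e by Hensel
      have hgX : ¬ g ∣ X := by
        intro hd
        have : g = X := eq_of_monic_of_associated hgm Polynomial.monic_X
          (hgirr.associated_of_dvd Polynomial.irreducible_X hd)
        exact hfX (this ▸ hgdvd)
      obtain ⟨p0, hp0⟩ := hfac g hgm hgirr hgdvd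
      obtain ⟨pg, hpg⟩ := hensel_lift M hMF hgirr hgX hp0 e he1
      -- combine via CRT
      have hcop : IsCoprime (g ^ e) h := ((hgirr.coprime_iff_not_dvd).mpr hgh).pow_left
      obtain ⟨a, b, hab⟩ := id hcop
      set p : F[X] := pg * (b * h) + ph * (a * g ^ e) with hpdef
      have h1 : g ^ e ∣ p - pg := ⟨(ph - pg) * a, by rw [hpdef]; linear_combination pg * hab⟩
      have h2 : h ∣ p - ph := ⟨b * (pg - ph), by rw [hpdef]; linear_combination ph * hab⟩
      have h3 : g ^ e ∣ p ^ M - X := by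
        have d1 : g ^ e ∣ p ^ M - pg ^ M := h1.trans (sub_dvd_pow_sub_pow _ _ _)
        have d2 : p ^ M - X = (p ^ M - pg ^ M) + (pg ^ M - X) := by ring
        rw [d2]
        exact dvd_add d1 hpg
      have h4 : h ∣ p ^ M - X := by
        have d1 : h ∣ p ^ M - ph ^ M := h2.trans (sub_dvd_pow_sub_pow _ _ _)
        have d2 : p ^ M - X = (p ^ M - ph ^ M) + (ph ^ M - X) := by ring
        rw [d2]
        exact dvd_add d1 hph
      exact ⟨p, hfe ▸ hcop.mul_dvd h3 h4⟩


end Auxiliary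


/-- Let `gcd(q,M) = 1` and let `α ∈ GL(n, F_q)` be regular, i.e. its
minimal polynomial equals its characteristic polynomial.  Then `X^M = α` has a solution in
`GL(n, F_q)` iff every monic irreducible factor `g` of the characteristic polynomial of `α`
is an M-power polynomial, i.e. `g(X^M)` has an irreducible factor of degree `deg g`. -/
theorem statement10 (F : Type*) [Field F] [Fintype F] (M : ℕ) (hM : 2 ≤ M)
    (hcop : Nat.Coprime (Fintype.card F) M) (n : ℕ) (α : GL (Fin n) F)
    (hreg : minpoly F (α : Matrix (Fin n) (Fin n) F) =
      Matrix.charpoly (α : Matrix (Fin n) (Fin n) F)) :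
    (∃ β : GL (Fin n) F, β ^ M = α) ↔
      ∀ g : F[X], g.Monic → Irreducible g →
        g ∣ Matrix.charpoly (α : Matrix (Fin n) (Fin n) F) →
        ∃ h : F[X], Irreducible h ∧ h ∣ g.comp (X ^ M) ∧ h.natDegree = g.natDegree := by
  classical
  set A : Matrix (Fin n) (Fin n) F := (α : Matrix (Fin n) (Fin n) F) with hA
  set f : F[X] := Matrix.charpoly A with hf
  have hfm : f.Monic := Matrix.charpoly_monic A
  have hM0 : M ≠ 0 := by omega
  have hMF : (M : F) ≠ 0 := by
    intro h0
    have hd : ringChar F ∣ M := ringChar.dvd h0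
    have hd2 : ringChar F ∣ Fintype.card F := ringChar.dvd (FiniteField.cast_card_eq_zero F)
    haveI : CharP F (ringChar F) := ringChar.charP F
    have hprime : (ringChar F).Prime := CharP.char_is_prime F (ringChar F)
    have : ringChar F ∣ Nat.gcd (Fintype.card F) M := Nat.dvd_gcd hd2 hd
    rw [hcop] at this
    exact Nat.Prime.one_lt hprime |>.ne' (Nat.dvd_one.mp this)
  constructor
  · rintro ⟨β, hβ⟩ g hgm hgirr hgdvd
    set B : Matrix (Fin n) (Fin n) F := (β : Matrix (Fin n) (Fin n) F) with hB
    have hBM : B ^ M = A := by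
      have h1 := congrArg (Units.val) hβ
      simpa [Units.val_pow_eq_pow_val] using h1
    have hcomm : A * B = B * A := by
      rw [← hBM, ← pow_succ, ← pow_succ']
    obtain ⟨q, hq⟩ := commutant_eq_poly hreg hcomm
    have hq0 : aeval A (q ^ M - X) = 0 := by
      rw [map_sub, map_pow, aeval_X, ← hq, hBM, sub_self]
    have hdvd : f ∣ q ^ M - X := hreg ▸ minpoly.dvd F A hq0
    have hgq : g ∣ q ^ M - X := hgdvd.trans hdvd
    refine (mpower_iff_root M hgirr).mp ⟨AdjoinRoot.mk g q, ?_⟩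
    have h2 : AdjoinRoot.mk g (q ^ M - X) = 0 := AdjoinRoot.mk_eq_zero.mpr hgq
    rw [map_sub, map_pow, sub_eq_zero] at h2
    exact h2.trans (AdjoinRoot.mk_X)
  · intro hyp
    have hXf : ¬ X ∣ f := by
      intro hd
      have h0 : f.coeff 0 = 0 := Polynomial.X_dvd_iff.mp hd
      have hdet : IsUnit A.det := (Matrix.isUnit_iff_isUnit_det A).mp α.isUnit
      rw [Matrix.det_eq_sign_charpoly_coeff, ← hf, h0, mul_zero] at hdet
      exact (by simpa using hdet : False)
    have hfac : ∀ g : F[X], g.Monic → Irreducible g → g ∣ f → ∃ p : F[X], g ∣ p ^ M - X := by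
      intro g hgm hgirr hgdvd
      obtain ⟨h, hhirr, hhdvd, hhdeg⟩ := hyp g hgm hgirr hgdvd
      obtain ⟨μ, hμ⟩ := (mpower_iff_root M hgirr).mpr ⟨h, hhirr, hhdvd, hhdeg⟩
      obtain ⟨p, hp⟩ := AdjoinRoot.mk_surjective μ
      refine ⟨p, ?_⟩
      rw [← AdjoinRoot.mk_eq_zero (f := g)]
      rw [map_sub, map_pow, hp, hμ, ← AdjoinRoot.mk_X (f := g), sub_self]
    obtain ⟨p, hp⟩ := crt_solve M hMF f.natDegree f le_rfl hfm hXf hfac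
    set B := aeval A p with hB
    have hBM : B ^ M = A := by
      obtain ⟨c, hc⟩ := hp
      have h0 : aeval A (p ^ M - X) = 0 := by
        rw [hc, _root_.map_mul]
        rw [hf, Matrix.aeval_self_charpoly, zero_mul]
      rw [map_sub, map_pow, aeval_X, sub_eq_zero] at h0
      exact h0
    have hdetB : IsUnit B.det := by
      have h1 : IsUnit (B.det ^ M) := by
        rw [← Matrix.det_pow, hBM]
        exact (Matrix.isUnit_iff_isUnit_det A).mp α.isUnit
      exact (isUnit_pow_iff hM0).mp h1
    have hBu : IsUnit B := (Matrix.isUnit_iff_isUnit_det B).mpr hdetB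
    refine ⟨hBu.unit, ?_⟩
    apply Units.ext
    have : ((hBu.unit ^ M : _ˣ) : Matrix (Fin n) (Fin n) F) = B ^ M := by
      rw [Units.val_pow_eq_pow_val, IsUnit.unit_spec]
    rw [this, hBM]
end
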